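/- arXiv:2402.15413 — 5 statements merged into one kernel-verified Lean document; each statement's English description precedes it below -/
import Mathlib

section
/- A function h from n-tuples of vectors in ℝ^d to ℝ is O(d)-invariant (i.e. h (g • X) = h X for all g in O(d) and all tuples X) if and only if there exists a function f from n×n real matrices to ℝ such that h X = f (Gram X) for every tuple X, where Gram X is the matrix of pairwise Euclidean inner products of the entries of X. -/
open Matrix

set_option maxHeartbeats 1000000

/-- The Gram matrix of a tuple of vectors: entries are pairwise Euclidean inner products. -/
def Gram {d n : ℕ} (X : Fin n → (Fin d → ℝ)) : Matrix (Fin n) (Fin n) ℝ :=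
  Matrix.of fun i j => ∑ k, X i k * X j k

section aux

variable {d n : ℕ}

/-- Cast a plain vector into Euclidean space. -/
def toE (x : Fin d → ℝ) : EuclideanSpace ℝ (Fin d) := WithLp.toLp 2 x

lemma inner_eq (x y : EuclideanSpace ℝ (Fin d)) : (inner ℝ x y : ℝ) = ∑ k, x k * y k := by
  rw [PiLp.inner_apply]
  exact Finset.sum_congr rfl fun k _ => by simp [RCLike.inner_apply, mul_comm]

noncomputable def combo (X : Fin n → (Fin d → ℝ)) : (Fin n → ℝ) →ₗ[ℝ] EuclideanSpace ℝ (Fin d) where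
  toFun c := ∑ i, c i • toE (X i)
  map_add' a b := by simp [add_smul, Finset.sum_add_distrib]
  map_smul' r a := by simp [Finset.smul_sum, smul_smul]

lemma combo_single (X : Fin n → (Fin d → ℝ)) (i : Fin n) :
    combo X (Pi.single i 1) = toE (X i) := by
  simp [combo, Pi.single_apply, Finset.sum_ite_eq]

lemma inner_combo (X Y : Fin n → (Fin d → ℝ)) (hXY : Gram X = Gram Y)
    (a b : Fin n → ℝ) :
    (inner ℝ (combo X a) (combo X b) : ℝ) = inner ℝ (combo Y a) (combo Y b) := by
  have key : ∀ Z : Fin n → (Fin d → ℝ), (inner ℝ (combo Z a) (combo Z b) : ℝ)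
      = ∑ i, ∑ j, b i * a j * Gram Z j i := by
    intro Z
    simp only [combo, LinearMap.coe_mk, AddHom.coe_mk, inner_sum, sum_inner,
      real_inner_smul_left, real_inner_smul_right, Gram, Matrix.of_apply, inner_eq]
    refine Finset.sum_congr rfl fun i _ => Finset.sum_congr rfl fun j _ => ?_
    simp only [toE, WithLp.ofLp_toLp]
    ring
  rw [key X, key Y, hXY]

lemma exists_isometry (X Y : Fin n → (Fin d → ℝ)) (hXY : Gram X = Gram Y) :
    ∃ L : EuclideanSpace ℝ (Fin d) →ₗᵢ[ℝ] EuclideanSpace ℝ (Fin d),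
      ∀ i, L (toE (X i)) = toE (Y i) := by
  classical
  set φ := combo X with hφ
  set ψ := combo Y with hψ
  have hker : LinearMap.ker φ ≤ LinearMap.ker ψ := by
    intro c hc
    rw [LinearMap.mem_ker] at hc ⊢
    have h1 : (inner ℝ (ψ c) (ψ c) : ℝ) = inner ℝ (φ c) (φ c) :=
      (inner_combo X Y hXY c c).symm
    rw [hc, inner_zero_left] at h1
    exact inner_self_eq_zero.mp h1
  set T : ((Fin n → ℝ) ⧸ LinearMap.ker φ) →ₗ[ℝ] EuclideanSpace ℝ (Fin d) :=
    (LinearMap.ker φ).liftQ ψ hker with hT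
  set e := φ.quotKerEquivRange with he
  set τ : LinearMap.range φ →ₗ[ℝ] EuclideanSpace ℝ (Fin d) :=
    T ∘ₗ (e.symm : LinearMap.range φ →ₗ[ℝ] _) with hτ
  have hτ_apply : ∀ c : Fin n → ℝ, τ ⟨φ c, LinearMap.mem_range_self φ c⟩ = ψ c := by
    intro c
    have h2 : e.symm ⟨φ c, LinearMap.mem_range_self φ c⟩ = (LinearMap.ker φ).mkQ c :=
      φ.quotKerEquivRange_symm_apply_image c (LinearMap.mem_range_self φ c)
    simp only [hτ, LinearMap.coe_comp, Function.comp_apply, LinearEquiv.coe_coe, h2, hT]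
    exact Submodule.liftQ_apply _ ψ c
  have hτ_norm : ∀ u : LinearMap.range φ, ‖τ u‖ = ‖u‖ := by
    rintro ⟨v, c, rfl⟩
    rw [hτ_apply c]
    have h1 : (inner ℝ (ψ c) (ψ c) : ℝ) = inner ℝ (φ c) (φ c) := (inner_combo X Y hXY c c).symm
    have h2 : ‖ψ c‖ * ‖ψ c‖ = ‖φ c‖ * ‖φ c‖ := by
      rw [← real_inner_self_eq_norm_mul_norm, ← real_inner_self_eq_norm_mul_norm, h1]
    have h3 := (mul_self_inj_of_nonneg (norm_nonneg (ψ c)) (norm_nonneg (φ c))).mp h2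
    rw [h3]
    rfl
  set τI : LinearMap.range φ →ₗᵢ[ℝ] EuclideanSpace ℝ (Fin d) := ⟨τ, hτ_norm⟩ with hτI
  refine ⟨τI.extend, fun i => ?_⟩
  have h4 : τI.extend (φ (Pi.single i 1)) = ψ (Pi.single i 1) := by
    have h5 := τI.extend_apply ⟨φ (Pi.single i 1), LinearMap.mem_range_self φ _⟩
    exact h5.trans (hτ_apply (Pi.single i 1))
  rw [← combo_single X i, ← combo_single Y i]
  exact h4

/-- Standard basis vectors in Euclidean space. -/
def eVec (l : Fin d) : EuclideanSpace ℝ (Fin d) := toE (Pi.single l 1)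

lemma inner_eVec (k l : Fin d) : (inner ℝ (eVec k) (eVec l) : ℝ) = if k = l then 1 else 0 := by
  rw [inner_eq]
  have h1 : ∀ m, (eVec k : EuclideanSpace ℝ (Fin d)) m * (eVec l : EuclideanSpace ℝ (Fin d)) m
      = if m = k then (if k = l then 1 else 0) else 0 := by
    intro m
    by_cases h2 : m = k <;> by_cases h3 : m = l <;> simp_all [eVec, toE, Pi.single_apply]
  rw [Finset.sum_congr rfl fun m _ => h1 m]
  rw [Finset.sum_ite_eq' Finset.univ k fun _ => if k = l then (1:ℝ) else 0]
  simp

lemma matrix_of_isometry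
    (L : EuclideanSpace ℝ (Fin d) →ₗᵢ[ℝ] EuclideanSpace ℝ (Fin d)) :
    ∃ g : Matrix (Fin d) (Fin d) ℝ, gᵀ * g = 1 ∧ ∀ v : Fin d → ℝ, g.mulVec v = L (toE v) := by
  classical
  set g : Matrix (Fin d) (Fin d) ℝ :=
    LinearMap.toMatrix' ((WithLp.linearEquiv 2 ℝ (Fin d → ℝ)).toLinearMap ∘ₗ L.toLinearMap ∘ₗ
      (WithLp.linearEquiv 2 ℝ (Fin d → ℝ)).symm.toLinearMap) with hg
  have hcol : ∀ v : Fin d → ℝ, g.mulVec v = L (toE v) := by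
    intro v
    rw [hg, ← Matrix.toLin'_apply, Matrix.toLin'_toMatrix']
    rfl
  have hentry : ∀ k l, g k l = L (eVec l) k := by
    intro k l
    rw [hg, LinearMap.toMatrix'_apply]
    have h6 : (fun j' : Fin d => if j' = l then (1:ℝ) else 0) = (eVec l).ofLp := by
      funext m
      simp [eVec, toE, Pi.single_apply]
    rfl
  refine ⟨g, ?_, hcol⟩
  ext i j
  rw [Matrix.mul_apply, Matrix.one_apply]
  have hsum : ∑ k, gᵀ i k * g k j = (inner ℝ (L (eVec i)) (L (eVec j)) : ℝ) := by
    rw [inner_eq]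
    refine Finset.sum_congr rfl fun k _ => ?_
    rw [Matrix.transpose_apply, hentry k i, hentry k j]
  rw [hsum, L.inner_map_map, inner_eVec]

lemma gram_exists_orthogonal (X Y : Fin n → (Fin d → ℝ)) (hXY : Gram X = Gram Y) :
    ∃ g : Matrix (Fin d) (Fin d) ℝ, gᵀ * g = 1 ∧ ∀ i, g.mulVec (X i) = Y i := by
  obtain ⟨L, hL⟩ := exists_isometry X Y hXY
  obtain ⟨g, hg1, hg2⟩ := matrix_of_isometry L
  exact ⟨g, hg1, fun i => (hg2 (X i)).trans (by rw [hL i]; rfl)⟩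

end aux

theorem invariant_iff_function_of_gram (d n : ℕ)
    (h : (Fin n → (Fin d → ℝ)) → ℝ) :
    (∀ g : Matrix (Fin d) (Fin d) ℝ, gᵀ * g = 1 →
      ∀ X : Fin n → (Fin d → ℝ), h (fun i => g.mulVec (X i)) = h X) ↔
    (∃ f : Matrix (Fin n) (Fin n) ℝ → ℝ,
      ∀ X : Fin n → (Fin d → ℝ), h X = f (Gram X)) := by
  classical
  constructor
  · intro hinv
    refine ⟨fun G => if hG : ∃ X, Gram X = G then h hG.choose else 0, fun X => ?_⟩
    have hG : ∃ Z, Gram Z = Gram X := ⟨X, rfl⟩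
    show h X = if hG' : ∃ Z, Gram Z = Gram X then h hG'.choose else 0
    rw [dif_pos hG]
    obtain ⟨g, hg, hgX⟩ := gram_exists_orthogonal hG.choose X hG.choose_spec
    rw [← hinv g hg hG.choose]
    congr 1
    funext i
    exact (hgX i).symm
  · rintro ⟨f, hf⟩ g hg X
    rw [hf, hf]
    congr 1
    ext i j
    show ∑ k, g.mulVec (X i) k * g.mulVec (X j) k = ∑ k, X i k * X j k
    have h0 : ∑ k, g.mulVec (X i) k * g.mulVec (X j) k = g.mulVec (X i) ⬝ᵥ g.mulVec (X j) := rfl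
    rw [h0]
    have h1 : g.mulVec (X i) = Matrix.vecMul (X i) gᵀ := by
      rw [Matrix.vecMul_transpose]
    rw [h1, Matrix.dotProduct_mulVec, Matrix.vecMul_vecMul, hg, Matrix.vecMul_one]
    rfl
end

section
/- A function h from n-tuples of vectors in ℝ^d to ℝ^d is O(d)-equivariant (i.e. h (g • X) = g.mulVec (h X) for all g in O(d) and all tuples X) if and only if there exist functions f_t (for t ∈ Fin n) from n×n real matrices to ℝ such that h X = ∑ t, f_t (Gram X) • (X t) for every tuple X. -/
open Matrix

lemma EquivAux.inner_eq_dot {d : ℕ} (x y : EuclideanSpace ℝ (Fin d)) :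
    inner ℝ x y = (x : Fin d → ℝ) ⬝ᵥ (y : Fin d → ℝ) := by
  simp [PiLp.inner_apply, RCLike.inner_apply, dotProduct, mul_comm]

lemma EquivAux.mulVec_dot {d : ℕ} (g : Matrix (Fin d) (Fin d) ℝ) (hg : gᵀ * g = 1)
    (a b : Fin d → ℝ) : g.mulVec a ⬝ᵥ g.mulVec b = a ⬝ᵥ b := by
  rw [dotProduct_mulVec, ← vecMul_transpose, vecMul_vecMul, hg, vecMul_one]

lemma EquivAux.vecMulVec_mul_vecMulVec {d : ℕ} (q : Fin d → ℝ) :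
    vecMulVec q q * vecMulVec q q = (q ⬝ᵥ q) • vecMulVec q q := by
  ext i j
  simp only [mul_apply, vecMulVec_apply, Matrix.smul_apply, smul_eq_mul, dotProduct, Finset.sum_mul]
  apply Finset.sum_congr rfl; intros; ring

lemma EquivAux.vecMulVec_mulVec {d : ℕ} (q w : Fin d → ℝ) :
    (vecMulVec q q).mulVec w = (q ⬝ᵥ w) • q := by
  ext i
  simp only [mulVec, dotProduct, vecMulVec_apply, Pi.smul_apply, smul_eq_mul, Finset.sum_mul]
  apply Finset.sum_congr rfl; intros; ring

lemma EquivAux.refl_orth {d : ℕ} (q : Fin d → ℝ) (hq : q ⬝ᵥ q ≠ 0) :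
    (1 - (2 * (q ⬝ᵥ q)⁻¹) • vecMulVec q q)ᵀ * (1 - (2 * (q ⬝ᵥ q)⁻¹) • vecMulVec q q) = 1 := by
  have hsym : (vecMulVec q q)ᵀ = vecMulVec q q := by
    ext i j; simp [vecMulVec_apply, mul_comm]
  set c := 2 * (q ⬝ᵥ q)⁻¹ with hc
  rw [transpose_sub, transpose_one, transpose_smul, hsym]
  simp only [sub_mul, mul_sub, one_mul, mul_one, mul_smul_comm, smul_mul_assoc,
    EquivAux.vecMulVec_mul_vecMulVec, smul_smul]
  have h2 : c * (q ⬝ᵥ q) = 2 := by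
    rw [hc]; field_simp
  rw [h2]
  module

lemma EquivAux.refl_mulVec {d : ℕ} (q w : Fin d → ℝ) :
    (1 - (2 * (q ⬝ᵥ q)⁻¹) • vecMulVec q q).mulVec w
      = w - (2 * (q ⬝ᵥ q)⁻¹ * (q ⬝ᵥ w)) • q := by
  rw [sub_mulVec, one_mulVec, smul_mulVec, EquivAux.vecMulVec_mulVec, smul_smul]

/-- An equivariant function takes values in the span of its inputs. -/
lemma EquivAux.span_lemma {d n : ℕ} (h : (Fin n → (Fin d → ℝ)) → (Fin d → ℝ))
    (hequiv : ∀ g : Matrix (Fin d) (Fin d) ℝ, gᵀ * g = 1 →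
      ∀ X : Fin n → (Fin d → ℝ), h (fun i => g.mulVec (X i)) = g.mulVec (h X))
    (X : Fin n → (Fin d → ℝ)) :
    ∃ c : Fin n → ℝ, h X = ∑ t, c t • X t := by
  let E := EuclideanSpace ℝ (Fin d)
  let X' : Fin n → E := fun i => WithLp.toLp 2 (X i)
  let K : Submodule ℝ E := Submodule.span ℝ (Set.range X')
  let v : E := WithLp.toLp 2 (h X)
  let p : E := (K.orthogonalProjectionOnto v : E)
  have hpK : p ∈ K := (K.orthogonalProjectionOnto v).2
  set q : E := v - p with hqdef
  have hqK : q ∈ Kᗮ := Submodule.sub_starProjection_mem_orthogonal (K := K) v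
  have hdot : ∀ i, (q : Fin d → ℝ) ⬝ᵥ X i = 0 := by
    intro i
    have := hqK (X' i) (Submodule.subset_span (Set.mem_range_self i))
    rw [EquivAux.inner_eq_dot] at this
    rw [← this]; exact dotProduct_comm _ _
  have hq0 : q = 0 := by
    by_contra hne
    have hs : (q : Fin d → ℝ) ⬝ᵥ (q : Fin d → ℝ) ≠ 0 := by
      intro h0
      apply hne
      have : inner ℝ q q = (0 : ℝ) := by rw [EquivAux.inner_eq_dot]; exact h0
      exact inner_self_eq_zero.mp this
    set R := 1 - (2 * ((q : Fin d → ℝ) ⬝ᵥ q)⁻¹) • vecMulVec (q : Fin d → ℝ) q with hR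
    have hfix : (fun i => R.mulVec (X i)) = X := by
      funext i
      rw [hR, EquivAux.refl_mulVec, hdot i, mul_zero, zero_smul, sub_zero]
    have heq := hequiv R (EquivAux.refl_orth _ hs) X
    rw [hfix, hR, EquivAux.refl_mulVec] at heq
    have hqv : (q : Fin d → ℝ) ⬝ᵥ (v : Fin d → ℝ) = (q : Fin d → ℝ) ⬝ᵥ q := by
      have hqp : (q : Fin d → ℝ) ⬝ᵥ (p : Fin d → ℝ) = 0 := by
        have := hqK p hpK
        rw [EquivAux.inner_eq_dot] at this
        rw [← this]; exact dotProduct_comm _ _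
      have hv : (v : Fin d → ℝ) = (p : Fin d → ℝ) + q := by
        rw [hqdef]; funext k; simp [E]
      rw [hv, dotProduct_add, hqp, zero_add]
    rw [show h X = (v : Fin d → ℝ) from rfl] at heq
    rw [hqv] at heq
    have h2 : 2 * ((q : Fin d → ℝ) ⬝ᵥ q)⁻¹ * ((q : Fin d → ℝ) ⬝ᵥ q) = 2 := by
      field_simp
    rw [h2] at heq
    have h3 : (2 : ℝ) • (q : Fin d → ℝ) = 0 := sub_eq_self.mp heq.symm
    have h4 : (q : Fin d → ℝ) = 0 := by
      have := smul_eq_zero.mp h3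
      simpa using this
    exact hne (by rw [← WithLp.toLp_ofLp (x := q), h4, WithLp.toLp_zero])
  have hvp : v = p := by rw [← sub_eq_zero]; exact hq0
  have hvK : v ∈ K := hvp ▸ hpK
  obtain ⟨c, hc⟩ := (Submodule.mem_span_range_iff_exists_fun ℝ).mp hvK
  exact ⟨c, by have := congrArg WithLp.ofLp hc.symm; simpa [E, X', v, WithLp.ofLp_sum] using this⟩

/-- The linear-combination map associated to a tuple of vectors. -/
noncomputable def EquivAux.lincomb {d n : ℕ} (X : Fin n → (Fin d → ℝ)) :
    (Fin n → ℝ) →ₗ[ℝ] EuclideanSpace ℝ (Fin d) where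
  toFun c := ∑ i, c i • (WithLp.toLp 2 (X i) : EuclideanSpace ℝ (Fin d))
  map_add' a b := by
    simp only [Pi.add_apply, add_smul]
    rw [Finset.sum_add_distrib]
  map_smul' r a := by
    simp only [Pi.smul_apply, smul_eq_mul, RingHom.id_apply, Finset.smul_sum, smul_smul]

lemma EquivAux.lincomb_dot {d n : ℕ} (X : Fin n → (Fin d → ℝ)) (c c' : Fin n → ℝ) :
    (EquivAux.lincomb X c : Fin d → ℝ) ⬝ᵥ (EquivAux.lincomb X c' : Fin d → ℝ)
      = ∑ i, ∑ j, c i * c' j * Gram X i j := by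
  have e : ∀ (Z : Fin n → Fin d → ℝ) (a : Fin n → ℝ), ((EquivAux.lincomb Z a : EuclideanSpace ℝ (Fin d)) : Fin d → ℝ) = ∑ i, a i • Z i := by
    intro Z a; simp [EquivAux.lincomb, WithLp.ofLp_sum]
  rw [e, e]
  simp only [dotProduct, Finset.sum_apply, Pi.smul_apply, smul_eq_mul, Finset.sum_mul,
    Finset.mul_sum, Gram, Matrix.of_apply]
  conv_lhs => enter [2, k]; rw [Finset.sum_comm]
  rw [Finset.sum_comm]
  apply Finset.sum_congr rfl
  intro i _
  rw [Finset.sum_comm]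
  apply Finset.sum_congr rfl
  intro j _
  apply Finset.sum_congr rfl
  intros
  ring

/-- Tuples with equal Gram matrices lie in the same `O(d)` orbit. -/
lemma EquivAux.gram_orbit {d n : ℕ} (X Y : Fin n → (Fin d → ℝ)) (hG : Gram X = Gram Y) :
    ∃ g : Matrix (Fin d) (Fin d) ℝ, gᵀ * g = 1 ∧ ∀ i, Y i = g.mulVec (X i) := by
  classical
  set T := EquivAux.lincomb X with hT
  set T' := EquivAux.lincomb Y with hT'
  have hinner : ∀ c c', (inner ℝ (T c) (T c') : ℝ) = inner ℝ (T' c) (T' c') := by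
    intro c c'
    rw [EquivAux.inner_eq_dot, EquivAux.inner_eq_dot, EquivAux.lincomb_dot,
      EquivAux.lincomb_dot, hG]
  have hker : LinearMap.ker T ≤ LinearMap.ker T' := by
    intro c hc
    rw [LinearMap.mem_ker] at hc ⊢
    have := hinner c c
    rw [hc, inner_zero_left] at this
    exact inner_self_eq_zero.mp this.symm
  let φ : ↥(LinearMap.range T) →ₗ[ℝ] EuclideanSpace ℝ (Fin d) :=
    ((LinearMap.ker T).liftQ T' hker).comp T.quotKerEquivRange.symm.toLinearMap
  have hφ : ∀ c : Fin n → ℝ, φ ⟨T c, LinearMap.mem_range_self T c⟩ = T' c := by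
    intro c
    show ((LinearMap.ker T).liftQ T' hker) (T.quotKerEquivRange.symm ⟨T c, _⟩) = T' c
    rw [LinearMap.quotKerEquivRange_symm_apply_image]
    exact Submodule.liftQ_apply _ _ _
  have hnorm : ∀ v : ↥(LinearMap.range T), ‖φ v‖ = ‖(v : EuclideanSpace ℝ (Fin d))‖ := by
    rintro ⟨v, c, rfl⟩
    rw [hφ c]
    have h1 : (inner ℝ (T' c) (T' c) : ℝ) = inner ℝ (T c) (T c) := (hinner c c).symm
    rw [real_inner_self_eq_norm_sq, real_inner_self_eq_norm_sq] at h1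
    nlinarith [norm_nonneg (T' c), norm_nonneg (T c)]
  let L : ↥(LinearMap.range T) →ₗᵢ[ℝ] EuclideanSpace ℝ (Fin d) := ⟨φ, hnorm⟩
  let L' := L.extend
  let g : Matrix (Fin d) (Fin d) ℝ :=
    Matrix.toEuclideanLin.symm L'.toLinearMap
  have hgv : ∀ v : Fin d → ℝ, g.mulVec v = (L' (WithLp.toLp 2 v) : Fin d → ℝ) := by
    intro v
    have := congrArg (fun f => (f (WithLp.toLp 2 v) : Fin d → ℝ)) (Matrix.toEuclideanLin.apply_symm_apply L'.toLinearMap)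
    exact this
  refine ⟨g, ?_, ?_⟩
  · ext i j
    have h1 : (gᵀ * g) i j = (g.mulVec (Pi.single i 1)) ⬝ᵥ (g.mulVec (Pi.single j 1)) := by
      simp only [mulVec_single_one, col_apply, mul_one, mul_apply, transpose_apply, dotProduct]
    rw [h1, hgv, hgv, ← EquivAux.inner_eq_dot, LinearIsometry.inner_map_map,
      EquivAux.inner_eq_dot]
    simp only [dotProduct, Pi.single_apply, one_apply]
    by_cases hij : i = j <;> simp [hij, eq_comm]
  · intro i
    have hXi : (WithLp.toLp 2 (X i) : EuclideanSpace ℝ (Fin d)) = T (Pi.single i 1) := by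
      show _ = ∑ j, Pi.single i 1 j • (WithLp.toLp 2 (X j) : EuclideanSpace ℝ (Fin d))
      rw [Finset.sum_eq_single i]
      · simp
      · intro b _ hb; simp [Pi.single_apply, hb.symm]
      · simp
    have hYi : (WithLp.toLp 2 (Y i) : EuclideanSpace ℝ (Fin d)) = T' (Pi.single i 1) := by
      show _ = ∑ j, Pi.single i 1 j • (WithLp.toLp 2 (Y j) : EuclideanSpace ℝ (Fin d))
      rw [Finset.sum_eq_single i]
      · simp
      · intro b _ hb; simp [Pi.single_apply, hb.symm]
      · simp
    have hmem : (WithLp.toLp 2 (X i) : EuclideanSpace ℝ (Fin d)) ∈ LinearMap.range T := by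
      rw [hXi]; exact LinearMap.mem_range_self T _
    have hg1 : g.mulVec (X i) = (L' (WithLp.toLp 2 (X i) : EuclideanSpace ℝ (Fin d)) : Fin d → ℝ) := hgv (X i)
    rw [hg1]
    have hext : L' (WithLp.toLp 2 (X i) : EuclideanSpace ℝ (Fin d)) = L ⟨(WithLp.toLp 2 (X i) : EuclideanSpace ℝ (Fin d)), hmem⟩ :=
      L.extend_apply ⟨_, hmem⟩
    rw [hext]
    show _ = (φ _ : Fin d → ℝ)
    have hsub : (⟨(WithLp.toLp 2 (X i) : EuclideanSpace ℝ (Fin d)), hmem⟩ : ↥(LinearMap.range T))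
        = ⟨T (Pi.single i 1), LinearMap.mem_range_self T _⟩ := Subtype.ext hXi
    rw [hsub, hφ, ← hYi]

theorem equivariant_iff_scalar_combination_of_inputs (d n : ℕ)
    (h : (Fin n → (Fin d → ℝ)) → (Fin d → ℝ)) :
    (∀ g : Matrix (Fin d) (Fin d) ℝ, gᵀ * g = 1 →
      ∀ X : Fin n → (Fin d → ℝ), h (fun i => g.mulVec (X i)) = g.mulVec (h X)) ↔
    (∃ f : Fin n → (Matrix (Fin n) (Fin n) ℝ → ℝ),
      ∀ X : Fin n → (Fin d → ℝ), h X = ∑ t, f t (Gram X) • X t) := by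
  classical
  constructor
  · intro hequiv
    choose c hc using EquivAux.span_lemma h hequiv
    refine ⟨fun t G => if hG : ∃ X, Gram X = G then c hG.choose t else 0, ?_⟩
    intro X
    have hex : ∃ X', Gram X' = Gram X := ⟨X, rfl⟩
    obtain ⟨g, hg, hY⟩ := EquivAux.gram_orbit hex.choose X hex.choose_spec
    have hXg : X = fun i => g.mulVec (hex.choose i) := funext hY
    have hlin : g.mulVec (∑ t, c hex.choose t • hex.choose t)
        = ∑ t, c hex.choose t • g.mulVec (hex.choose t) := by
      rw [← mulVecLin_apply, map_sum]
      apply Finset.sum_congr rfl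
      intro t _
      rw [mulVecLin_apply, mulVec_smul]
    calc h X = h (fun i => g.mulVec (hex.choose i)) := by rw [← hXg]
      _ = g.mulVec (h hex.choose) := hequiv g hg hex.choose
      _ = g.mulVec (∑ t, c hex.choose t • hex.choose t) := by rw [hc hex.choose]
      _ = ∑ t, c hex.choose t • g.mulVec (hex.choose t) := hlin
      _ = ∑ t, c hex.choose t • X t := by
          apply Finset.sum_congr rfl; intro t _; rw [← hY t]
      _ = ∑ t, (if hG : ∃ X', Gram X' = Gram X then c hG.choose t else 0) • X t := by
          simp only [dif_pos hex]
  · rintro ⟨f, hf⟩ g hg X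
    have hGram : Gram (fun i => g.mulVec (X i)) = Gram X := by
      ext i j
      show (g.mulVec (X i)) ⬝ᵥ (g.mulVec (X j)) = X i ⬝ᵥ X j
      exact EquivAux.mulVec_dot g hg _ _
    rw [hf, hf, hGram]
    rw [← mulVecLin_apply, map_sum]
    apply Finset.sum_congr rfl
    intro t _
    rw [mulVecLin_apply, mulVec_smul]
end

section
/- If two n-tuples X and Y of vectors in ℝ^d have equal Gram matrices, i.e. ∑ k, X i k * X j k = ∑ k, Y i k * Y j k for all i, j ∈ Fin n, then there exists g in O(d) with Y i = g.mulVec (X i) for every i ∈ Fin n. -/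
open Matrix
open RealInnerProductSpace

theorem equal_gram_implies_orthogonal_transform (d n : ℕ)
    (X Y : Fin n → (Fin d → ℝ))
    (hGram : ∀ i j : Fin n, ∑ k, X i k * X j k = ∑ k, Y i k * Y j k) :
    ∃ g : Matrix (Fin d) (Fin d) ℝ, gᵀ * g = 1 ∧ ∀ i, Y i = g.mulVec (X i) := by
  classical
  set E := EuclideanSpace ℝ (Fin d)
  let X' : Fin n → E := fun i => WithLp.toLp 2 (X i)
  let Y' : Fin n → E := fun i => WithLp.toLp 2 (Y i)
  -- combination maps
  let φX : (Fin n → ℝ) →ₗ[ℝ] E := ∑ i, LinearMap.smulRight (LinearMap.proj i) (X' i)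
  let φY : (Fin n → ℝ) →ₗ[ℝ] E := ∑ i, LinearMap.smulRight (LinearMap.proj i) (Y' i)
  have hφX : ∀ c, φX c = ∑ i, c i • X' i := by
    intro c; simp [φX]
  have hφY : ∀ c, φY c = ∑ i, c i • Y' i := by
    intro c; simp [φY]
  have hinnerX : ∀ c c', ⟪φX c, φX c'⟫ = ∑ i, ∑ j, c i * c' j * ∑ k, X i k * X j k := by
    intro c c'
    rw [hφX, hφX, sum_inner]
    refine Finset.sum_congr rfl fun i _ => ?_
    rw [inner_sum]
    refine Finset.sum_congr rfl fun j _ => ?_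
    rw [real_inner_smul_left, real_inner_smul_right]
    have : ⟪X' i, X' j⟫ = ∑ k, X i k * X j k := (PiLp.inner_apply _ _).trans (Finset.sum_congr rfl fun _ _ => mul_comm _ _)
    rw [this]; ring
  have hinnerY : ∀ c c', ⟪φY c, φY c'⟫ = ∑ i, ∑ j, c i * c' j * ∑ k, Y i k * Y j k := by
    intro c c'
    rw [hφY, hφY, sum_inner]
    refine Finset.sum_congr rfl fun i _ => ?_
    rw [inner_sum]
    refine Finset.sum_congr rfl fun j _ => ?_
    rw [real_inner_smul_left, real_inner_smul_right]
    have : ⟪Y' i, Y' j⟫ = ∑ k, Y i k * Y j k := (PiLp.inner_apply _ _).trans (Finset.sum_congr rfl fun _ _ => mul_comm _ _)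
    rw [this]; ring
  have hinner : ∀ c c', ⟪φX c, φX c'⟫ = ⟪φY c, φY c'⟫ := by
    intro c c'
    rw [hinnerX, hinnerY]
    refine Finset.sum_congr rfl fun i _ => Finset.sum_congr rfl fun j _ => ?_
    rw [hGram]
  have hker : LinearMap.ker φX ≤ LinearMap.ker φY := by
    intro c hc
    rw [LinearMap.mem_ker] at hc ⊢
    have : ⟪φY c, φY c⟫ = 0 := by rw [← hinner, hc, inner_zero_left]
    exact inner_self_eq_zero.mp this
  -- factor: map on range φX
  let q := φX.quotKerEquivRange
  let f0 : ((Fin n → ℝ) ⧸ LinearMap.ker φX) →ₗ[ℝ] E := (LinearMap.ker φX).liftQ φY hker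
  let fS : LinearMap.range φX →ₗ[ℝ] E := f0 ∘ₗ q.symm.toLinearMap
  have hfS : ∀ c, fS ⟨φX c, LinearMap.mem_range_self _ c⟩ = φY c := by
    intro c
    have hq : q (Submodule.Quotient.mk c) = ⟨φX c, LinearMap.mem_range_self _ c⟩ :=
      Subtype.ext (φX.quotKerEquivRange_apply_mk c)
    have : q.symm ⟨φX c, LinearMap.mem_range_self _ c⟩ = Submodule.Quotient.mk c := by
      rw [← hq, LinearEquiv.symm_apply_apply]
    simp only [fS, LinearMap.coe_comp, Function.comp_apply, LinearEquiv.coe_toLinearMap, this]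
    exact Submodule.liftQ_apply _ _ _
  -- fS preserves norm
  have hfS_inner : ∀ x y : LinearMap.range φX, ⟪fS x, fS y⟫ = ⟪(x : E), (y : E)⟫ := by
    rintro ⟨x, cx, rfl⟩ ⟨y, cy, rfl⟩
    rw [hfS cx, hfS cy]
    exact (hinner cx cy).symm
  let fI : LinearMap.range φX →ₗᵢ[ℝ] E :=
    { toLinearMap := fS
      norm_map' := fun x => by
        rw [← Real.sqrt_sq (norm_nonneg (fS x)), ← Real.sqrt_sq (norm_nonneg x),
          ← real_inner_self_eq_norm_sq, ← real_inner_self_eq_norm_sq, hfS_inner]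
        rfl }
  let T := fI.extend
  -- T maps X i to Y i
  have hTX : ∀ i, T (X' i) = Y' i := by
    intro i
    have hX : X' i = φX (Pi.single i 1) := by
      rw [hφX]
      simp [Pi.single_apply, Finset.sum_ite_eq']
    have hY : Y' i = φY (Pi.single i 1) := by
      rw [hφY]
      simp [Pi.single_apply, Finset.sum_ite_eq']
    have := fI.extend_apply ⟨φX (Pi.single i 1), LinearMap.mem_range_self _ _⟩
    rw [hX, hY, this]
    exact hfS _
  -- now build the matrix
  let g : Matrix (Fin d) (Fin d) ℝ := LinearMap.toMatrix' ((WithLp.linearEquiv 2 ℝ (Fin d → ℝ)).toLinearMap ∘ₗ T.toLinearMap ∘ₗ (WithLp.linearEquiv 2 ℝ (Fin d → ℝ)).symm.toLinearMap)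
  have hg : ∀ v : Fin d → ℝ, g.mulVec v = (T (WithLp.toLp 2 v)).ofLp := by
    intro v
    rw [← Matrix.toLin'_apply, Matrix.toLin'_toMatrix']
    rfl
  refine ⟨g, ?_, ?_⟩
  · ext i j
    let e : Fin d → E := fun l => WithLp.toLp 2 (Pi.single l 1 : Fin d → ℝ)
    have h1 : (gᵀ * g) i j = ∑ k, g k i * g k j := by
      simp [Matrix.mul_apply, transpose_apply]
    have h2 : ∀ k l, g k l = T (e l) k := by
      intro k l
      have : g *ᵥ Pi.single l 1 = (T (e l)).ofLp := hg (Pi.single l 1)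
      calc g k l = (g *ᵥ Pi.single l 1) k := by
              simp [Matrix.mulVec_single]
        _ = T (e l) k := by rw [this]
    have h3 : ∑ k, g k i * g k j = ⟪T (e i), T (e j)⟫ := by
      rw [show (⟪T (e i), T (e j)⟫ : ℝ) = ∑ k, T (e i) k * T (e j) k from (PiLp.inner_apply _ _).trans (Finset.sum_congr rfl fun _ _ => mul_comm _ _)]
      exact Finset.sum_congr rfl fun k _ => by rw [h2 k i, h2 k j]
    rw [h1, h3, T.inner_map_map]
    have : (⟪e i, e j⟫ : ℝ) = ∑ k, Pi.single i 1 k * Pi.single j 1 k := (PiLp.inner_apply _ _).trans (Finset.sum_congr rfl fun _ _ => mul_comm _ _)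
    rw [this]
    simp [Pi.single_apply, Finset.sum_ite_eq, Matrix.one_apply, eq_comm]
  · intro i
    rw [hg]
    exact (congrArg WithLp.ofLp (hTX i)).symm
end

section
/- Let h be a continuous O(d)-invariant function from n-tuples of vectors in ℝ^d to ℝ, let K be a compact set of tuples that is O(d)-invariant (g • X ∈ K whenever X ∈ K and g ∈ O(d)), and let ε > 0. Then there exists a real polynomial p in n² variables indexed by Fin n × Fin n such that for every X ∈ K, |h X - p.eval (fun (i, j) => (Gram X) i j)| < ε. -/
open Matrix
open scoped RealInnerProductSpace

section A
variable {d n : ℕ}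

lemma inner_comb {E : Type*} [NormedAddCommGroup E] [InnerProductSpace ℝ E]
    (v w : Fin n → E) (c c' : Fin n → ℝ) :
    ⟪∑ i, c i • v i, ∑ j, c' j • w j⟫ = ∑ i, ∑ j, c i * c' j * ⟪v i, w j⟫ := by
  rw [sum_inner]
  refine Finset.sum_congr rfl fun i _ => ?_
  rw [inner_sum]
  refine Finset.sum_congr rfl fun j _ => ?_
  rw [real_inner_smul_left, real_inner_smul_right]
  ring

set_option maxHeartbeats 1000000 in
lemma gram_eq_orth (X Y : Fin n → (Fin d → ℝ)) (hXY : Gram X = Gram Y) :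
    ∃ g : Matrix (Fin d) (Fin d) ℝ, gᵀ * g = 1 ∧ ∀ i, Y i = g.mulVec (X i) := by
  classical
  let E := EuclideanSpace ℝ (Fin d)
  let X' : Fin n → E := fun i => (WithLp.equiv 2 (Fin d → ℝ)).symm (X i)
  let Y' : Fin n → E := fun i => (WithLp.equiv 2 (Fin d → ℝ)).symm (Y i)
  have hinnerX : ∀ i j, ⟪X' i, X' j⟫ = Gram X i j := fun i j => by
    change ⟪(WithLp.toLp 2 (X i) : EuclideanSpace ℝ (Fin d)), WithLp.toLp 2 (X j)⟫ = _
    simp [Gram, PiLp.inner_apply, mul_comm]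
  have hinnerY : ∀ i j, ⟪Y' i, Y' j⟫ = Gram Y i j := fun i j => by
    change ⟪(WithLp.toLp 2 (Y i) : EuclideanSpace ℝ (Fin d)), WithLp.toLp 2 (Y j)⟫ = _
    simp [Gram, PiLp.inner_apply, mul_comm]
  let A : (Fin n → ℝ) →ₗ[ℝ] E :=
    { toFun := fun c => ∑ i, c i • X' i
      map_add' := fun c c' => by simp [add_smul, Finset.sum_add_distrib]
      map_smul' := fun r c => by simp [smul_smul, Finset.smul_sum] }
  let B : (Fin n → ℝ) →ₗ[ℝ] E :=
    { toFun := fun c => ∑ i, c i • Y' i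
      map_add' := fun c c' => by simp [add_smul, Finset.sum_add_distrib]
      map_smul' := fun r c => by simp [smul_smul, Finset.smul_sum] }
  have hA : ∀ c, A c = ∑ i, c i • X' i := fun _ => rfl
  have hB : ∀ c, B c = ∑ i, c i • Y' i := fun _ => rfl
  have hinner : ∀ c c', ⟪A c, A c'⟫ = ⟪B c, B c'⟫ := by
    intro c c'
    rw [hA, hA, hB, hB, inner_comb, inner_comb]
    refine Finset.sum_congr rfl fun i _ => Finset.sum_congr rfl fun j _ => ?_
    rw [hinnerX, hinnerY, hXY]
  have hker : LinearMap.ker A ≤ LinearMap.ker B := by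
    intro c hc
    rw [LinearMap.mem_ker] at hc ⊢
    have : ⟪B c, B c⟫ = (0:ℝ) := by rw [← hinner, hc, inner_zero_left]
    exact inner_self_eq_zero.mp this
  let B' : ((Fin n → ℝ) ⧸ LinearMap.ker A) →ₗ[ℝ] E := (LinearMap.ker A).liftQ B hker
  let T : (LinearMap.range A) →ₗ[ℝ] E := B'.comp (A.quotKerEquivRange.symm : _ →ₗ[ℝ] _)
  have hT : ∀ c : Fin n → ℝ, T ⟨A c, LinearMap.mem_range_self A c⟩ = B c := by
    intro c
    simp only [T, LinearMap.comp_apply, LinearEquiv.coe_coe]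
    rw [A.quotKerEquivRange_symm_apply_image c]
    simp [B', Submodule.liftQ_apply]
  have hTnorm : ∀ v : LinearMap.range A, ‖T v‖ = ‖v‖ := by
    rintro ⟨v, c, rfl⟩
    rw [hT]
    have h1 := hinner c c
    rw [real_inner_self_eq_norm_sq, real_inner_self_eq_norm_sq] at h1
    have hn : ‖(⟨A c, LinearMap.mem_range_self A c⟩ : LinearMap.range A)‖ = ‖A c‖ := rfl
    rw [hn]
    nlinarith [norm_nonneg (A c), norm_nonneg (B c)]
  let L : (LinearMap.range A) →ₗᵢ[ℝ] E := ⟨T, hTnorm⟩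
  let Lx : E →ₗᵢ[ℝ] E := L.extend
  have hmemA : ∀ i, A (Pi.single i 1) = X' i := by
    intro i; rw [hA]
    simp [Pi.single_apply]
  have hLX : ∀ i, Lx (X' i) = Y' i := by
    intro i
    have h3 := L.extend_apply ⟨A (Pi.single i 1), LinearMap.mem_range_self A _⟩
    have h4 : L (⟨A (Pi.single i 1), LinearMap.mem_range_self A _⟩ : LinearMap.range A)
        = B (Pi.single i 1) := hT _
    rw [h4] at h3
    calc Lx (X' i) = Lx (A (Pi.single i 1)) := by rw [hmemA]
    _ = B (Pi.single i 1) := h3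
    _ = Y' i := by rw [hB]; simp [Pi.single_apply]
  let g : Matrix (Fin d) (Fin d) ℝ :=
    LinearMap.toMatrix' ((WithLp.linearEquiv 2 ℝ (Fin d → ℝ)).toLinearMap ∘ₗ Lx.toLinearMap ∘ₗ
      (WithLp.linearEquiv 2 ℝ (Fin d → ℝ)).symm.toLinearMap)
  have hg : ∀ v : Fin d → ℝ, g.mulVec v = Lx ((WithLp.equiv 2 (Fin d → ℝ)).symm v) := by
    intro v
    show (Matrix.toLin' (LinearMap.toMatrix' ((WithLp.linearEquiv 2 ℝ (Fin d → ℝ)).toLinearMap ∘ₗ Lx.toLinearMap ∘ₗ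
      (WithLp.linearEquiv 2 ℝ (Fin d → ℝ)).symm.toLinearMap))) v = _
    rw [Matrix.toLin'_toMatrix']
    rfl
  refine ⟨g, ?_, fun i => by rw [hg, hLX]; rfl⟩
  ext i j
  have h7 : ∀ k, g.mulVec (Pi.single k 1) = Lx (EuclideanSpace.single k 1) := by
    intro k; rw [hg]; rfl
  have h6 : ⟪Lx (EuclideanSpace.single i 1), Lx (EuclideanSpace.single j 1)⟫
      = ⟪(EuclideanSpace.single i 1 : E), (EuclideanSpace.single j 1 : E)⟫ :=
    Lx.inner_map_map _ _
  have h8 : (gᵀ * g) i j = ⟪Lx (EuclideanSpace.single i 1), Lx (EuclideanSpace.single j 1)⟫ := by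
    rw [PiLp.inner_apply, ← h7, ← h7]
    simp only [RCLike.inner_apply, starRingEnd_apply, star_trivial]
    rw [Matrix.mul_apply]
    refine Finset.sum_congr rfl fun k _ => ?_
    rw [Matrix.transpose_apply, mul_comm]
    congr 1
    · simp [Matrix.mulVec, dotProduct, Pi.single_apply]
    · simp [Matrix.mulVec, dotProduct, Pi.single_apply]
  rw [h8, h6, PiLp.inner_apply]
  simp only [RCLike.inner_apply, starRingEnd_apply, star_trivial, EuclideanSpace.single_apply]
  rw [Matrix.one_apply]
  by_cases hij : i = j <;> simp [hij, eq_comm]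
end A


theorem invariant_scalar_polynomial_approximation (d n : ℕ)
    (h : (Fin n → (Fin d → ℝ)) → ℝ) (hc : Continuous h)
    (hinv : ∀ g : Matrix (Fin d) (Fin d) ℝ, gᵀ * g = 1 →
      ∀ X : Fin n → (Fin d → ℝ), h (fun i => g.mulVec (X i)) = h X)
    (K : Set (Fin n → (Fin d → ℝ))) (hK : IsCompact K)
    (hKinv : ∀ g : Matrix (Fin d) (Fin d) ℝ, gᵀ * g = 1 →
      ∀ X ∈ K, (fun i => g.mulVec (X i)) ∈ K)
    (ε : ℝ) (hε : 0 < ε) :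
    ∃ p : MvPolynomial (Fin n × Fin n) ℝ,
      ∀ X ∈ K,
        |h X - MvPolynomial.eval (fun ij : Fin n × Fin n => Gram X ij.1 ij.2) p| < ε := by
  classical
  have hkey : ∀ X Y : Fin n → Fin d → ℝ, Gram X = Gram Y → h X = h Y := by
    intro X Y hXY
    obtain ⟨g, hg, hgi⟩ := gram_eq_orth X Y hXY
    rw [show Y = fun i => g.mulVec (X i) from funext hgi, hinv g hg]
  have hGc : Continuous (fun X : Fin n → Fin d → ℝ => Gram X) := by
    apply continuous_pi; intro i; apply continuous_pi; intro j
    show Continuous fun X : Fin n → Fin d → ℝ => ∑ k, X i k * X j k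
    exact continuous_finset_sum Finset.univ fun k _ =>
      ((continuous_apply_apply i k).mul (continuous_apply_apply j k))
  set S : Set (Matrix (Fin n) (Fin n) ℝ) := Gram '' K with hSdef
  have hS : IsCompact S := hK.image hGc
  haveI : CompactSpace S := isCompact_iff_compactSpace.mp hS
  haveI : CompactSpace K := isCompact_iff_compactSpace.mp hK
  let q : K → S := fun x => ⟨Gram x.1, ⟨x.1, x.2, rfl⟩⟩
  have hqc : Continuous q := Continuous.subtype_mk (hGc.comp continuous_subtype_val) _
  have hqs : Function.Surjective q := by
    rintro ⟨s, x, hx, rfl⟩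
    exact ⟨⟨x, hx⟩, rfl⟩
  have hq := (hqc.isClosedMap).isQuotientMap hqc hqs
  let f : S → ℝ := fun s => h (Function.surjInv hqs s).1
  have hfq : ∀ x : K, f (q x) = h x.1 := by
    intro x
    apply hkey
    have : q (Function.surjInv hqs (q x)) = q x := Function.surjInv_eq hqs (q x)
    exact congrArg Subtype.val this
  have hfc : Continuous f := by
    rw [hq.continuous_iff]
    have : (f ∘ q) = fun x : K => h x.1 := funext hfq
    rw [this]
    exact hc.comp continuous_subtype_val
  let F : C(S, ℝ) := ⟨f, hfc⟩
  -- the algebra of polynomial functions in matrix entries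
  let coord : Fin n × Fin n → C(S, ℝ) := fun ij =>
    ⟨fun s => (s : Matrix (Fin n) (Fin n) ℝ) ij.1 ij.2,
      (continuous_apply ij.2).comp ((continuous_apply ij.1).comp continuous_subtype_val)⟩
  let φ : MvPolynomial (Fin n × Fin n) ℝ →ₐ[ℝ] C(S, ℝ) := MvPolynomial.aeval coord
  have hφeval : ∀ p s, (φ p) s = MvPolynomial.eval
      (fun ij : Fin n × Fin n => (s : Matrix (Fin n) (Fin n) ℝ) ij.1 ij.2) p := by
    intro p s
    induction p using MvPolynomial.induction_on with
    | C a => simp [φ]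
    | add p q hp hq => simp [map_add, hp, hq]
    | mul_X p ij hp => simp [_root_.map_mul, hp, φ, coord]
  have hsep : (φ.range : Subalgebra ℝ C(S, ℝ)).SeparatesPoints := by
    intro s t hst
    have : (s : Matrix (Fin n) (Fin n) ℝ) ≠ t := fun hh => hst (Subtype.ext hh)
    obtain ⟨i, hi⟩ := Function.ne_iff.mp this
    obtain ⟨j, hj⟩ := Function.ne_iff.mp hi
    exact ⟨φ (MvPolynomial.X (i, j)), ⟨φ (MvPolynomial.X (i, j)), ⟨_, rfl⟩, rfl⟩, by
      simpa [hφeval] using hj⟩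
  have htop := ContinuousMap.subalgebra_topologicalClosure_eq_top_of_separatesPoints φ.range hsep
  have hFmem : F ∈ (φ.range).topologicalClosure := htop ▸ Algebra.mem_top
  have hclos : F ∈ closure (φ.range : Set C(S, ℝ)) := hFmem
  obtain ⟨G, hGA, hGd⟩ := Metric.mem_closure_iff.mp hclos ε hε
  obtain ⟨p, rfl⟩ := hGA
  refine ⟨p, fun X hX => ?_⟩
  set s : S := q ⟨X, hX⟩ with hsdef
  have h1 : h X = F s := (hfq ⟨X, hX⟩).symm
  have h2 : MvPolynomial.eval (fun ij : Fin n × Fin n => Gram X ij.1 ij.2) p = (φ p) s := by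
    rw [hφeval]
  rw [h1, h2, ← Real.dist_eq]
  exact lt_of_le_of_lt (ContinuousMap.dist_apply_le_dist s) hGd
end

section
/- Let G be a finite group with group homomorphisms ρX from G to O(n) and ρY from G to O(m), let h : (Fin n → ℝ) → (Fin m → ℝ) be G-equivariant (h ((ρX g).mulVec x) = (ρY g).mulVec (h x) for all g, x), and let f : (Fin n → ℝ) → (Fin m → ℝ) be any function. Then for every x, the Euclidean norm of (S f) x - h x is at most the maximum over g ∈ G of the Euclidean norm of f ((ρX g)⁻¹.mulVec x) - h ((ρX g)⁻¹.mulVec x), where (S f) x = (|G| : ℝ)⁻¹ • ∑ g ∈ G, (ρY g).mulVec (f ((ρX g)⁻¹.mulVec x)). -/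
open Matrix

noncomputable def euclNorm {m : ℕ} (v : Fin m → ℝ) : ℝ :=
  Real.sqrt (∑ k, (v k) ^ 2)

lemma euclNorm_eq {m : ℕ} (v : Fin m → ℝ) :
    euclNorm v = ‖(WithLp.linearEquiv 2 ℝ (Fin m → ℝ)).symm v‖ := by
  rw [EuclideanSpace.norm_eq]
  simp [euclNorm, sq_abs, WithLp.linearEquiv]

lemma euclNorm_orth {m : ℕ} (U : Matrix.orthogonalGroup (Fin m) ℝ) (v : Fin m → ℝ) :
    euclNorm ((U : Matrix (Fin m) (Fin m) ℝ).mulVec v) = euclNorm v := by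
  have h1 : ∀ w : Fin m → ℝ, ∑ k, (w k)^2 = w ⬝ᵥ w := by
    intro w; simp [dotProduct, sq]
  unfold euclNorm
  rw [h1, h1, Matrix.dotProduct_mulVec]
  have : Matrix.vecMul ((U : Matrix (Fin m) (Fin m) ℝ).mulVec v) (U : Matrix (Fin m) (Fin m) ℝ)
      = v := by
    rw [← Matrix.mulVec_transpose, Matrix.mulVec_mulVec]
    have hU : ((U : Matrix (Fin m) (Fin m) ℝ))ᵀ * (U : Matrix (Fin m) (Fin m) ℝ) = 1 := by
      have := U.prop.1
      simpa [Matrix.star_eq_conjTranspose] using this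
    rw [hU, Matrix.one_mulVec]
  rw [this]

theorem symmetrization_error_bound (n m : ℕ)
    (G : Type*) [Group G] [Fintype G]
    (ρX : G →* Matrix.orthogonalGroup (Fin n) ℝ)
    (ρY : G →* Matrix.orthogonalGroup (Fin m) ℝ)
    (h : (Fin n → ℝ) → (Fin m → ℝ))
    (hequiv : ∀ (g : G) (x : Fin n → ℝ),
      h ((ρX g : Matrix (Fin n) (Fin n) ℝ).mulVec x) =
        (ρY g : Matrix (Fin m) (Fin m) ℝ).mulVec (h x))
    (f : (Fin n → ℝ) → (Fin m → ℝ))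
    (S : ((Fin n → ℝ) → (Fin m → ℝ)) → ((Fin n → ℝ) → (Fin m → ℝ)))
    (hS : ∀ x : Fin n → ℝ,
      S f x = (Fintype.card G : ℝ)⁻¹ •
        ∑ g : G, ((ρY g : Matrix (Fin m) (Fin m) ℝ)).mulVec
          (f (((ρX g)⁻¹ : Matrix (Fin n) (Fin n) ℝ).mulVec x))) :
    ∀ x : Fin n → ℝ,
      euclNorm (S f x - h x) ≤
        Finset.univ.sup' Finset.univ_nonempty (fun g : G =>
          euclNorm (f (((ρX g)⁻¹ : Matrix (Fin n) (Fin n) ℝ).mulVec x) -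
            h (((ρX g)⁻¹ : Matrix (Fin n) (Fin n) ℝ).mulVec x))) := by
  intro x
  set c : ℝ := (Fintype.card G : ℝ) with hc
  have hc0 : c ≠ 0 := Nat.cast_ne_zero.mpr Fintype.card_ne_zero
  set xg : G → (Fin n → ℝ) :=
    fun g => (((ρX g)⁻¹ : Matrix (Fin n) (Fin n) ℝ)).mulVec x with hxgdef
  have hxg : ∀ g : G, (ρX g : Matrix (Fin n) (Fin n) ℝ).mulVec (xg g) = x := by
    intro g
    rw [hxgdef, Matrix.mulVec_mulVec]
    have hu : (ρX g : Matrix (Fin n) (Fin n) ℝ) * ((ρX g : Matrix (Fin n) (Fin n) ℝ))ᵀ = 1 := by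
      have := (ρX g).prop.2
      simpa [Matrix.star_eq_conjTranspose] using this
    have hdet : IsUnit ((ρX g : Matrix (Fin n) (Fin n) ℝ)).det := by
      refine IsUnit.of_mul_eq_one ((ρX g : Matrix (Fin n) (Fin n) ℝ))ᵀ.det ?_
      rw [← Matrix.det_mul, hu, Matrix.det_one]
    rw [Matrix.mul_nonsing_inv _ hdet, Matrix.one_mulVec]
  have hhx : h x = c⁻¹ • ∑ g : G, (ρY g : Matrix (Fin m) (Fin m) ℝ).mulVec (h (xg g)) := by
    have hterm : ∀ g ∈ Finset.univ,
        (ρY g : Matrix (Fin m) (Fin m) ℝ).mulVec (h (xg g)) = h x := by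
      intro g _; rw [← hequiv, hxg]
    rw [Finset.sum_congr rfl hterm, Finset.sum_const, Finset.card_univ,
      ← Nat.cast_smul_eq_nsmul ℝ, smul_smul, inv_mul_cancel₀ hc0, one_smul]
  have key : S f x - h x = c⁻¹ • ∑ g : G,
      (ρY g : Matrix (Fin m) (Fin m) ℝ).mulVec (f (xg g) - h (xg g)) := by
    rw [hS, hhx, ← smul_sub, ← Finset.sum_sub_distrib]
    congr 1
    refine Finset.sum_congr rfl fun g _ => ?_
    rw [Matrix.mulVec_sub]
  rw [key]
  set M : ℝ := Finset.univ.sup' Finset.univ_nonempty (fun g : G =>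
          euclNorm (f (((ρX g)⁻¹ : Matrix (Fin n) (Fin n) ℝ).mulVec x) -
            h (((ρX g)⁻¹ : Matrix (Fin n) (Fin n) ℝ).mulVec x))) with hM
  have hnorm : euclNorm (c⁻¹ • ∑ g : G,
      (ρY g : Matrix (Fin m) (Fin m) ℝ).mulVec (f (xg g) - h (xg g)))
      ≤ c⁻¹ * ∑ g : G, euclNorm (f (xg g) - h (xg g)) := by
    rw [euclNorm_eq, LinearEquiv.map_smul, norm_smul, map_sum]
    have h2 : ‖∑ g : G, (WithLp.linearEquiv 2 ℝ (Fin m → ℝ)).symm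
        ((ρY g : Matrix (Fin m) (Fin m) ℝ).mulVec (f (xg g) - h (xg g)))‖
        ≤ ∑ g : G, euclNorm (f (xg g) - h (xg g)) := by
      refine (norm_sum_le _ _).trans ?_
      refine Finset.sum_le_sum fun g _ => ?_
      rw [← euclNorm_eq, euclNorm_orth]
    have h3 : ‖c⁻¹‖ = c⁻¹ := by
      rw [Real.norm_eq_abs, abs_of_nonneg]
      positivity
    rw [h3]
    exact mul_le_mul_of_nonneg_left h2 (by positivity)
  refine hnorm.trans ?_
  have h4 : ∑ g : G, euclNorm (f (xg g) - h (xg g)) ≤ c * M := by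
    have hle : ∀ g ∈ (Finset.univ : Finset G), euclNorm (f (xg g) - h (xg g)) ≤ M := by
      intro g _
      exact Finset.le_sup' (fun g : G =>
          euclNorm (f (((ρX g : Matrix (Fin n) (Fin n) ℝ))⁻¹.mulVec x) -
            h (((ρX g : Matrix (Fin n) (Fin n) ℝ))⁻¹.mulVec x))) (Finset.mem_univ g)
    have := Finset.sum_le_sum hle
    simpa [Finset.sum_const, Finset.card_univ, nsmul_eq_mul] using this
  calc c⁻¹ * ∑ g : G, euclNorm (f (xg g) - h (xg g)) ≤ c⁻¹ * (c * M) := by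
        exact mul_le_mul_of_nonneg_left h4 (by positivity)
    _ = M := by rw [← mul_assoc, inv_mul_cancel₀ hc0, one_mul]
end
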